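/- Let Γ be a finite subgroup of PSL₂(ℂ) and p ∈ ℙ¹ a point with nontrivial stabilizer. Then Stab_Γ(p) is a maximal cyclic subgroup of Γ: it is cyclic and is not properly contained in any other cyclic subgroup of Γ. -/

import Mathlib

set_option synthInstance.maxHeartbeats 400000

open Matrix Projectivization

/-- The special linear group `SL₂(ℂ)`. -/
abbrev SL2 : Type := Matrix.SpecialLinearGroup (Fin 2) ℂ

/-- The complex projective line `ℙ¹`. -/
abbrev ProjLine : Type := Projectivization ℂ (Fin 2 → ℂ)

lemma projmk_congr {v w : Fin 2 → ℂ} (hv : v ≠ 0) (hw : w ≠ 0) (h : v = w) :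
    Projectivization.mk ℂ v hv = Projectivization.mk ℂ w hw := by subst h; rfl

/-- The Möbius action of `SL₂(ℂ)` on `ℙ¹`. -/
noncomputable instance : MulAction SL2 ProjLine where
  smul A p := Projectivization.map (Matrix.SpecialLinearGroup.toLin' A).toLinearMap
      (Matrix.SpecialLinearGroup.toLin' A).injective p
  one_smul p := by
    induction p using Projectivization.ind with
    | h v hv =>
      show Projectivization.map _ _ _ = _
      rw [Projectivization.map_mk]
      exact projmk_congr _ _ (by rw [_root_.map_one]; rfl)
  mul_smul A B p := by
    induction p using Projectivization.ind with
    | h v hv =>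
      show Projectivization.map _ _ _ =
        Projectivization.map _ _ (Projectivization.map _ _ _)
      rw [Projectivization.map_mk, Projectivization.map_mk, Projectivization.map_mk]
      exact projmk_congr _ _ (by rw [_root_.map_mul]; rfl)

lemma center_smul_eq (z : SL2) (hz : z ∈ Subgroup.center SL2) (p : ProjLine) : z • p = p := by
  obtain ⟨r, hr, hrz⟩ := Matrix.SpecialLinearGroup.mem_center_iff.mp hz
  have hr0 : r ≠ 0 := by
    intro h; rw [h] at hr; simp at hr
  induction p using Projectivization.ind with
  | h v hv =>
    show Projectivization.map _ _ _ = _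
    rw [Projectivization.map_mk, Projectivization.mk_eq_mk_iff']
    refine ⟨r, ?_⟩
    have h1 : (Matrix.SpecialLinearGroup.toLin' z).toLinearMap v
        = (z : Matrix (Fin 2) (Fin 2) ℂ) *ᵥ v := rfl
    rw [h1, ← hrz]
    show _ = (Matrix.scalar (Fin 2)) r *ᵥ v
    funext i
    simp [Matrix.scalar_apply, Matrix.mulVec_diagonal]

/-- The projective special linear group `PSL₂(ℂ)`. -/
abbrev PSL2 : Type := SL2 ⧸ Subgroup.center SL2

/-- The Möbius action of `PSL₂(ℂ)` on `ℙ¹`. -/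
noncomputable instance : MulAction PSL2 ProjLine where
  smul q p := Quotient.liftOn' q (fun A => A • p) (fun a b hab => by
    rw [QuotientGroup.leftRel_apply] at hab
    show a • p = b • p
    conv_rhs => rw [show b = a * (a⁻¹ * b) by group]
    rw [mul_smul, center_smul_eq _ hab])
  one_smul p := one_smul (M := SL2) p
  mul_smul q r p := by
    induction q using Quotient.inductionOn' with
    | h a =>
      induction r using Quotient.inductionOn' with
      | h b => exact mul_smul (α := SL2) a b p


section Helpers

open Matrix

/-- `A *ᵥ v ≠ 0` for `A ∈ SL₂` and `v ≠ 0`. -/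
lemma SL2.mulVec_ne_zero (A : SL2) {v : Fin 2 → ℂ} (hv : v ≠ 0) :
    (A : Matrix (Fin 2) (Fin 2) ℂ) *ᵥ v ≠ 0 := by
  intro h
  apply hv
  have := (Matrix.SpecialLinearGroup.toLin' A).injective
  have h2 : (Matrix.SpecialLinearGroup.toLin' A) v = (Matrix.SpecialLinearGroup.toLin' A) 0 := by
    rw [map_zero]
    exact h
  exact this h2

lemma psl_smul_mk (A : SL2) (v : Fin 2 → ℂ) (hv : v ≠ 0) :
    (QuotientGroup.mk A : PSL2) • Projectivization.mk ℂ v hv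
      = Projectivization.mk ℂ ((A : Matrix (Fin 2) (Fin 2) ℂ) *ᵥ v) (SL2.mulVec_ne_zero A hv) := by
  have h1 : (QuotientGroup.mk A : PSL2) • Projectivization.mk ℂ v hv
      = A • Projectivization.mk ℂ v hv := rfl
  rw [h1]
  show Projectivization.map (Matrix.SpecialLinearGroup.toLin' A).toLinearMap
      (Matrix.SpecialLinearGroup.toLin' A).injective _ = _
  rw [Projectivization.map_mk]
  exact projmk_congr _ _ rfl

/-- Elements of the stabilizer act on a representing vector by a nonzero scalar. -/
lemma exists_eig_of_stab {A : SL2} {v : Fin 2 → ℂ} (hv : v ≠ 0)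
    (h : (QuotientGroup.mk A : PSL2) ∈ MulAction.stabilizer PSL2 (Projectivization.mk ℂ v hv)) :
    ∃ c : ℂ, c ≠ 0 ∧ (A : Matrix (Fin 2) (Fin 2) ℂ) *ᵥ v = c • v := by
  have h' : (QuotientGroup.mk A : PSL2) • Projectivization.mk ℂ v hv = Projectivization.mk ℂ v hv :=
    h
  rw [psl_smul_mk] at h'
  rw [Projectivization.mk_eq_mk_iff'] at h'
  obtain ⟨a, ha⟩ := h'
  refine ⟨a, ?_, ha.symm⟩
  intro h0
  exact SL2.mulVec_ne_zero A hv (by rw [← ha, h0, zero_smul])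

lemma eig_unique {v : Fin 2 → ℂ} (hv : v ≠ 0) {M : Matrix (Fin 2) (Fin 2) ℂ} {c d : ℂ}
    (h1 : M *ᵥ v = c • v) (h2 : M *ᵥ v = d • v) : c = d := by
  have h3 : (c - d) • v = 0 := by rw [sub_smul, ← h1, ← h2, sub_self]
  by_contra hcd
  rcases smul_eq_zero.mp h3 with h | h
  · exact hcd (by linear_combination h)
  · exact hv h

/-- Cayley–Hamilton for 2×2 matrices. -/
lemma sq_eq_trace_smul (A : Matrix (Fin 2) (Fin 2) ℂ) :
    A * A = A.trace • A - A.det • (1 : Matrix (Fin 2) (Fin 2) ℂ) := by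
  ext i j
  fin_cases i <;> fin_cases j <;>
    simp [Matrix.mul_apply, Fin.sum_univ_two, Matrix.trace_fin_two, Matrix.det_fin_two,
      Matrix.one_apply] <;> ring

lemma unipotent_pow_eq_one {A : Matrix (Fin 2) (Fin 2) ℂ} {m : ℕ} (hm : 0 < m)
    (hpow : A ^ m = 1) (htr : A.trace = 2) (hdet : A.det = 1) : A = 1 := by
  set N : Matrix (Fin 2) (Fin 2) ℂ := A - 1 with hN
  have hN2 : N * N = 0 := by
    have h := sq_eq_trace_smul A
    rw [htr, hdet] at h
    have : N * N = A * A - (2 : ℂ) • A + 1 := by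
      simp only [hN, sub_mul, mul_sub, mul_one, one_mul, two_smul]
      abel
    rw [this, h, one_smul]
    abel
  have key : ∀ k : ℕ, A ^ k = 1 + (k : ℂ) • N := by
    intro k
    induction k with
    | zero => simp
    | succ k ih =>
      rw [pow_succ, ih]
      have hA : A = 1 + N := by simp [hN]
      rw [hA]
      rw [add_mul, one_mul, mul_add, mul_one, smul_mul_assoc, hN2]
      push_cast
      rw [add_smul, one_smul]
      rw [smul_zero]
      abel
  have h1 : (1 : Matrix (Fin 2) (Fin 2) ℂ) + (m : ℂ) • N = 1 := by rw [← key, hpow]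
  have h2 : (m : ℂ) • N = 0 := by
    have := congrArg (fun X => X - (1 : Matrix (Fin 2) (Fin 2) ℂ)) h1
    simpa using this
  have hm' : (m : ℂ) ≠ 0 := Nat.cast_ne_zero.mpr hm.ne'
  have : N = 0 := by
    rcases smul_eq_zero.mp h2 with h | h
    · exact absurd h hm'
    · exact h
  have := congrArg (fun X => X + (1 : Matrix (Fin 2) (Fin 2) ℂ)) (hN ▸ this)
  simpa using this

lemma eigen_pow {M : Matrix (Fin 2) (Fin 2) ℂ} {v : Fin 2 → ℂ} {μ : ℂ}
    (h : M *ᵥ v = μ • v) (k : ℕ) : (M ^ k) *ᵥ v = (μ ^ k) • v := by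
  induction k with
  | zero => simp
  | succ k ih =>
    rw [pow_succ, ← Matrix.mulVec_mulVec, h, Matrix.mulVec_smul, ih, smul_smul, pow_succ]
    ring_nf

/-- trace is 2 when 1 is an eigenvalue of a determinant-one 2×2 matrix. -/
lemma trace_eq_two {A : Matrix (Fin 2) (Fin 2) ℂ} (hdet : A.det = 1) {v : Fin 2 → ℂ}
    (hv : v ≠ 0) (h : A *ᵥ v = v) : A.trace = 2 := by
  have h0 : (A - 1) *ᵥ v = 0 := by
    rw [Matrix.sub_mulVec, Matrix.one_mulVec, h, sub_self]
  have hdet0 : (A - 1).det = 0 := by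
    rw [← Matrix.exists_mulVec_eq_zero_iff]
    exact ⟨v, hv, h0⟩
  have e1 : (A - 1).det = A.det - A.trace + 1 := by
    simp only [Matrix.det_fin_two, Matrix.trace_fin_two, Matrix.sub_apply, Matrix.one_apply_eq,
      Matrix.one_apply_ne (by decide : (0 : Fin 2) ≠ 1), Matrix.one_apply_ne (by decide : (1 : Fin 2) ≠ 0)]
    ring
  rw [e1, hdet] at hdet0
  linear_combination -hdet0

end Helpers
section Helpers2

open Matrix

lemma span_two {v₁ v₂ : Fin 2 → ℂ} (hΔ : v₁ 0 * v₂ 1 - v₁ 1 * v₂ 0 ≠ 0) (w : Fin 2 → ℂ) :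
    ∃ a b : ℂ, w = a • v₁ + b • v₂ := by
  set Δ := v₁ 0 * v₂ 1 - v₁ 1 * v₂ 0
  refine ⟨(w 0 * v₂ 1 - w 1 * v₂ 0) / Δ, (v₁ 0 * w 1 - v₁ 1 * w 0) / Δ, ?_⟩
  funext i
  fin_cases i <;>
    · show w _ = _ / Δ * v₁ _ + _ / Δ * v₂ _
      field_simp
      simp only [Δ, Fin.zero_eta, Fin.mk_one]
      ring

lemma indep_two {v₁ v₂ : Fin 2 → ℂ} (hΔ : v₁ 0 * v₂ 1 - v₁ 1 * v₂ 0 ≠ 0) {a b : ℂ}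
    (h : a • v₁ + b • v₂ = 0) : a = 0 ∧ b = 0 := by
  have h0 : a * v₁ 0 + b * v₂ 0 = 0 := congrFun h 0
  have h1 : a * v₁ 1 + b * v₂ 1 = 0 := congrFun h 1
  constructor
  · by_contra ha
    apply hΔ
    have : a * (v₁ 0 * v₂ 1 - v₁ 1 * v₂ 0) = 0 := by linear_combination v₂ 1 * h0 - v₂ 0 * h1
    rcases mul_eq_zero.mp this with h | h
    · exact absurd h ha
    · exact h
  · by_contra hb
    apply hΔ
    have : b * (v₁ 0 * v₂ 1 - v₁ 1 * v₂ 0) = 0 := by linear_combination v₁ 0 * h1 - v₁ 1 * h0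
    rcases mul_eq_zero.mp this with h | h
    · exact absurd h hb
    · exact h

lemma prop_two {v₁ v₂ : Fin 2 → ℂ} (hΔ : v₁ 0 * v₂ 1 - v₁ 1 * v₂ 0 = 0) (hv₁ : v₁ ≠ 0) :
    ∃ r : ℂ, v₂ = r • v₁ := by
  by_cases h0 : v₁ 0 = 0
  · have h1 : v₁ 1 ≠ 0 := by
      intro h1
      apply hv₁
      funext i; fin_cases i <;> assumption
    refine ⟨v₂ 1 / v₁ 1, ?_⟩
    funext i
    fin_cases i
    · show v₂ 0 = v₂ 1 / v₁ 1 * v₁ 0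
      have : v₁ 1 * v₂ 0 = 0 := by linear_combination -hΔ + v₂ 1 * h0
      rcases mul_eq_zero.mp this with h | h
      · exact absurd h h1
      · rw [h, h0, mul_zero]
    · show v₂ 1 = v₂ 1 / v₁ 1 * v₁ 1
      field_simp
  · refine ⟨v₂ 0 / v₁ 0, ?_⟩
    funext i
    fin_cases i
    · show v₂ 0 = v₂ 0 / v₁ 0 * v₁ 0
      field_simp
    · show v₂ 1 = v₂ 0 / v₁ 0 * v₁ 1
      field_simp
      linear_combination hΔ

/-- Elements of the center of SL₂(ℂ) act on vectors by a scalar `r` with `r ^ 2 = 1`. -/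
lemma center_mulVec {z : SL2} (hz : z ∈ Subgroup.center SL2) :
    ∃ r : ℂ, r ^ 2 = 1 ∧ ∀ v : Fin 2 → ℂ, (z : Matrix (Fin 2) (Fin 2) ℂ) *ᵥ v = r • v := by
  obtain ⟨r, hr, hrz⟩ := Matrix.SpecialLinearGroup.mem_center_iff.mp hz
  refine ⟨r, by simpa using hr, fun v => ?_⟩
  rw [← hrz]
  funext i
  simp [Matrix.scalar_apply, Matrix.mulVec_diagonal]

end Helpers2
section Helpers3

open Matrix

lemma scalar_eq_smul_one (r : ℂ) :
    (Matrix.scalar (Fin 2)) r = r • (1 : Matrix (Fin 2) (Fin 2) ℂ) := by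
  ext i j
  by_cases h : i = j <;> simp [Matrix.scalar_apply, Matrix.one_apply, Matrix.diagonal, h]

/-- If `A^n` is central and `A` has trace `±2`, then `A` is central. -/
lemma mem_center_of_trace {A : SL2} {n : ℕ} (hn : 0 < n)
    (hcen : A ^ n ∈ Subgroup.center SL2)
    (htr : (A : Matrix (Fin 2) (Fin 2) ℂ).trace = 2 ∨
      (A : Matrix (Fin 2) (Fin 2) ℂ).trace = -2) :
    A ∈ Subgroup.center SL2 := by
  obtain ⟨r, hr, hrA⟩ := Matrix.SpecialLinearGroup.mem_center_iff.mp hcen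
  have hr2 : r ^ 2 = 1 := by simpa using hr
  have hpow : ((A : Matrix (Fin 2) (Fin 2) ℂ)) ^ (2 * n) = 1 := by
    have h1 : ((A : Matrix (Fin 2) (Fin 2) ℂ)) ^ n = (Matrix.scalar (Fin 2)) r := by
      rw [hrA]; norm_cast
    calc ((A : Matrix (Fin 2) (Fin 2) ℂ)) ^ (2 * n)
        = (((A : Matrix (Fin 2) (Fin 2) ℂ)) ^ n) ^ 2 := by rw [← pow_mul, mul_comm]
      _ = (Matrix.scalar (Fin 2)) (r ^ 2) := by rw [h1, map_pow]
      _ = 1 := by rw [hr2, _root_.map_one]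
  have h2n : 0 < 2 * n := by omega
  have hdet : (A : Matrix (Fin 2) (Fin 2) ℂ).det = 1 := A.property
  rcases htr with ht | ht
  · have hA1 : (A : Matrix (Fin 2) (Fin 2) ℂ) = 1 :=
      unipotent_pow_eq_one h2n hpow ht hdet
    exact Matrix.SpecialLinearGroup.mem_center_iff.mpr
      ⟨1, by norm_num, by rw [_root_.map_one, hA1]⟩
  · have hdet' : (-(A : Matrix (Fin 2) (Fin 2) ℂ)).det = 1 := by
      rw [Matrix.det_neg, hdet]
      norm_num
    have htr' : (-(A : Matrix (Fin 2) (Fin 2) ℂ)).trace = 2 := by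
      rw [Matrix.trace_neg, ht]; norm_num
    have hpow' : (-(A : Matrix (Fin 2) (Fin 2) ℂ)) ^ (2 * n) = 1 := by
      rw [neg_pow, Even.neg_one_pow ⟨n, by ring⟩, one_mul, hpow]
    have hA1 : -(A : Matrix (Fin 2) (Fin 2) ℂ) = 1 := unipotent_pow_eq_one h2n hpow' htr' hdet'
    have hA : (A : Matrix (Fin 2) (Fin 2) ℂ) = -1 := by
      rw [← neg_neg (A : Matrix (Fin 2) (Fin 2) ℂ), hA1]
    exact Matrix.SpecialLinearGroup.mem_center_iff.mpr
      ⟨-1, by norm_num, by rw [scalar_eq_smul_one, hA]; simp⟩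

/-- If `A^n` is central and `A` has an eigenvector with eigenvalue `c`, `c² = 1`,
then `A` is central. -/
lemma mem_center_of_eig {A : SL2} {n : ℕ} (hn : 0 < n)
    (hcen : A ^ n ∈ Subgroup.center SL2) {v : Fin 2 → ℂ} (hv : v ≠ 0) {c : ℂ}
    (hc : (A : Matrix (Fin 2) (Fin 2) ℂ) *ᵥ v = c • v) (hc2 : c ^ 2 = 1) :
    A ∈ Subgroup.center SL2 := by
  have hdet : (A : Matrix (Fin 2) (Fin 2) ℂ).det = 1 := A.property
  have hcases : c = 1 ∨ c = -1 := by
    have : (c - 1) * (c + 1) = 0 := by linear_combination hc2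
    rcases mul_eq_zero.mp this with h | h
    · left; linear_combination h
    · right; linear_combination h
  apply mem_center_of_trace hn hcen
  rcases hcases with h | h
  · left
    exact trace_eq_two hdet hv (by rw [hc, h, one_smul])
  · right
    have hdet' : (-(A : Matrix (Fin 2) (Fin 2) ℂ)).det = 1 := by
      rw [Matrix.det_neg, hdet]; norm_num
    have h2 : (-(A : Matrix (Fin 2) (Fin 2) ℂ)).trace = 2 := by
      apply trace_eq_two hdet' hv
      rw [Matrix.neg_mulVec, hc, h]
      funext i; simp
    rw [Matrix.trace_neg] at h2
    linear_combination -h2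

open scoped Classical

/-- A choice of eigenvalue for the action of a matrix on `v`. -/
noncomputable def eig (v : Fin 2 → ℂ) (M : Matrix (Fin 2) (Fin 2) ℂ) : ℂ :=
  if h : ∃ c : ℂ, M *ᵥ v = c • v then h.choose else 1

lemma eig_spec {v : Fin 2 → ℂ} {M : Matrix (Fin 2) (Fin 2) ℂ}
    (h : ∃ c : ℂ, M *ᵥ v = c • v) : M *ᵥ v = eig v M • v := by
  classical
  rw [eig]
  rw [dif_pos h]
  exact h.choose_spec

lemma eig_eq {v : Fin 2 → ℂ} (hv : v ≠ 0) {M : Matrix (Fin 2) (Fin 2) ℂ} {c : ℂ}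
    (h : M *ᵥ v = c • v) : eig v M = c :=
  eig_unique hv (eig_spec ⟨c, h⟩) h

end Helpers3
section Helpers4

open Matrix

/-- A finite subgroup of `PSL₂(ℂ)` contained in the stabilizer of a point is cyclic. -/
lemma stab_isCyclic {p : ProjLine} (S : Subgroup PSL2) [hFin : Finite ↥S]
    (hstab : S ≤ MulAction.stabilizer PSL2 p) : IsCyclic ↥S := by
  have hv : p.rep ≠ 0 := p.rep_nonzero
  set v : Fin 2 → ℂ := p.rep with hvdef
  have hp : Projectivization.mk ℂ v hv = p := p.mk_rep
  have key : ∀ q : PSL2, q ∈ MulAction.stabilizer PSL2 p →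
      ((Quotient.out q : SL2) : Matrix (Fin 2) (Fin 2) ℂ) *ᵥ v
        = eig v ((Quotient.out q : SL2) : Matrix (Fin 2) (Fin 2) ℂ) • v ∧
      eig v ((Quotient.out q : SL2) : Matrix (Fin 2) (Fin 2) ℂ) ≠ 0 := by
    intro q hq
    have hq' : q ∈ MulAction.stabilizer PSL2 (Projectivization.mk ℂ v hv) := by
      rw [hp]; exact hq
    rw [← QuotientGroup.out_eq' q] at hq'
    obtain ⟨c, hc0, hc⟩ := exists_eig_of_stab hv hq'
    have he := eig_eq hv hc
    exact ⟨by rw [he]; exact hc, by rw [he]; exact hc0⟩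
  have hcen : ∀ z : SL2, z ∈ Subgroup.center SL2 →
      ∃ r : ℂ, r ^ 2 = 1 ∧ eig v (z : Matrix (Fin 2) (Fin 2) ℂ) = r := by
    intro z hz
    obtain ⟨r, hr2, hmv⟩ := center_mulVec hz
    exact ⟨r, hr2, eig_eq hv (hmv v)⟩
  let f : ↥S →* ℂ := {
    toFun := fun s => (eig v ((Quotient.out (s : PSL2) : SL2) : Matrix (Fin 2) (Fin 2) ℂ)) ^ 2
    map_one' := by
      have h1 : (QuotientGroup.mk (Quotient.out ((1 : ↥S) : PSL2)) : PSL2) = 1 := by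
        rw [QuotientGroup.out_eq']
        simp
      have h2 := (QuotientGroup.eq_one_iff _).mp h1
      obtain ⟨r, hr2, he⟩ := hcen _ h2
      show (eig v _) ^ 2 = 1
      rw [he, hr2]
    map_mul' := by
      intro s t
      show (eig v ((Quotient.out ((s * t : ↥S) : PSL2) : SL2) : Matrix (Fin 2) (Fin 2) ℂ)) ^ 2
        = (eig v ((Quotient.out ((s : ↥S) : PSL2) : SL2) : Matrix (Fin 2) (Fin 2) ℂ)) ^ 2 *
          (eig v ((Quotient.out ((t : ↥S) : PSL2) : SL2) : Matrix (Fin 2) (Fin 2) ℂ)) ^ 2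
      set Ast : SL2 := Quotient.out ((s * t : ↥S) : PSL2) with hAst
      set As : SL2 := Quotient.out ((s : ↥S) : PSL2) with hAs
      set At : SL2 := Quotient.out ((t : ↥S) : PSL2) with hAt
      have hmk : (QuotientGroup.mk Ast : PSL2) = QuotientGroup.mk (As * At) := by
        rw [hAst, hAs, hAt, QuotientGroup.out_eq']
        have : (QuotientGroup.mk (Quotient.out ((s : ↥S) : PSL2) *
            Quotient.out ((t : ↥S) : PSL2)) : PSL2)
            = QuotientGroup.mk (Quotient.out ((s : ↥S) : PSL2)) *
              QuotientGroup.mk (Quotient.out ((t : ↥S) : PSL2)) := rfl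
        rw [this, QuotientGroup.out_eq', QuotientGroup.out_eq']
        norm_cast
      obtain ⟨z, hzc, hz⟩ : ∃ z ∈ Subgroup.center SL2, As * At = Ast * z := by
        refine ⟨Ast⁻¹ * (As * At), QuotientGroup.eq.mp hmk, ?_⟩
        group
      obtain ⟨r, hr2, hmv⟩ := center_mulVec hzc
      obtain ⟨hcs, hcs0⟩ := key _ (hstab s.2)
      obtain ⟨hct, hct0⟩ := key _ (hstab t.2)
      obtain ⟨hcst, hcst0⟩ := key _ (hstab (s * t).2)
      rw [← hAs] at hcs hcs0
      rw [← hAt] at hct hct0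
      rw [← hAst] at hcst hcst0
      set cs := eig v (As : Matrix (Fin 2) (Fin 2) ℂ)
      set ct := eig v (At : Matrix (Fin 2) (Fin 2) ℂ)
      set cst := eig v (Ast : Matrix (Fin 2) (Fin 2) ℂ)
      have e1 : ((As * At : SL2) : Matrix (Fin 2) (Fin 2) ℂ) *ᵥ v = (cs * ct) • v := by
        rw [Matrix.SpecialLinearGroup.coe_mul, ← Matrix.mulVec_mulVec, hct,
          Matrix.mulVec_smul, hcs, smul_smul, mul_comm]
      have e2 : ((As * At : SL2) : Matrix (Fin 2) (Fin 2) ℂ) *ᵥ v = (r * cst) • v := by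
        rw [hz, Matrix.SpecialLinearGroup.coe_mul, ← Matrix.mulVec_mulVec, hmv,
          Matrix.mulVec_smul, hcst, smul_smul, mul_comm]
      have e3 : cs * ct = r * cst := eig_unique hv ((eig_eq hv e1) ▸ e1) e2
      linear_combination (-(cs * ct + r * cst)) * e3 - cst ^ 2 * hr2 }
  have hker : ∀ s : ↥S, f s = 1 → s = 1 := by
    intro s hs1
    obtain ⟨hc, hc0⟩ := key _ (hstab s.2)
    have hn : 0 < orderOf s := orderOf_pos s
    have hsn : (s : PSL2) ^ orderOf s = 1 := by
      have := pow_orderOf_eq_one s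
      have h2 := congrArg (fun x : ↥S => (x : PSL2)) this
      exact_mod_cast h2
    have hcenpow : (Quotient.out (s : PSL2) : SL2) ^ orderOf s ∈ Subgroup.center SL2 := by
      rw [← QuotientGroup.eq_one_iff]
      rw [QuotientGroup.mk_pow, QuotientGroup.out_eq']
      exact hsn
    have hmem := mem_center_of_eig hn hcenpow hv hc hs1
    have : (s : PSL2) = 1 := by
      rw [← QuotientGroup.out_eq' (s : PSL2)]
      exact (QuotientGroup.eq_one_iff _).mpr hmem
    exact Subtype.ext this
  have hinj : Function.Injective f := by
    intro s t hst
    have hft0 : f t ≠ 0 := by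
      obtain ⟨_, hc0⟩ := key _ (hstab t.2)
      exact pow_ne_zero 2 hc0
    have h1 : f (s * t⁻¹) = 1 := by
      rw [_root_.map_mul, hst, ← _root_.map_mul, mul_inv_cancel, _root_.map_one]
    have := hker _ h1
    rwa [mul_inv_eq_one] at this
  exact isCyclic_of_subgroup_isDomain f hinj

end Helpers4
section Helpers5

open Matrix

lemma eigenvec_exists {A : Matrix (Fin 2) (Fin 2) ℂ} (hdet : A.det = 1) {μ : ℂ}
    (hμ : μ ^ 2 - A.trace * μ + 1 = 0) : ∃ v : Fin 2 → ℂ, v ≠ 0 ∧ A *ᵥ v = μ • v := by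
  have hd0 : (A - μ • 1).det = 0 := by
    rw [Matrix.trace_fin_two] at hμ
    rw [Matrix.det_fin_two] at hdet ⊢
    simp only [Matrix.sub_apply, Matrix.smul_apply, Matrix.one_apply_eq,
      Matrix.one_apply_ne (by decide : (0 : Fin 2) ≠ 1),
      Matrix.one_apply_ne (by decide : (1 : Fin 2) ≠ 0), smul_eq_mul, mul_one, mul_zero,
      sub_zero]
    linear_combination hμ + hdet
  obtain ⟨v, hv, hv0⟩ := Matrix.exists_mulVec_eq_zero_iff.mpr hd0
  refine ⟨v, hv, ?_⟩
  have h1 : A *ᵥ v - (μ • 1) *ᵥ v = 0 := by rw [← Matrix.sub_mulVec]; exact hv0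
  rw [Matrix.smul_mulVec, Matrix.one_mulVec] at h1
  exact sub_eq_zero.mp h1

/-- If `g` has finite order, some positive power of `g` is a nontrivial element of the
stabilizer of `p`, then `g` itself stabilizes `p`. -/
lemma generator_mem_stabilizer {p : ProjLine} {g s₀ : PSL2} {n k : ℕ} (hn : 0 < n)
    (hgn : g ^ n = 1) (hk : g ^ k = s₀) (hs₀ : s₀ ≠ 1)
    (hstab : s₀ ∈ MulAction.stabilizer PSL2 p) : g ∈ MulAction.stabilizer PSL2 p := by
  have hw : p.rep ≠ 0 := p.rep_nonzero
  set w : Fin 2 → ℂ := p.rep with hwdef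
  have hp : Projectivization.mk ℂ w hw = p := p.mk_rep
  set G : SL2 := Quotient.out g with hGdef
  have hG : (QuotientGroup.mk G : PSL2) = g := QuotientGroup.out_eq' g
  set A : Matrix (Fin 2) (Fin 2) ℂ := (G : Matrix (Fin 2) (Fin 2) ℂ) with hAdef
  have hdet : A.det = 1 := G.property
  have hg1 : g ≠ 1 := fun h => hs₀ (by rw [← hk, h, one_pow])
  have hGnc : G ∉ Subgroup.center SL2 := fun h => hg1 (by
    rw [← hG]; exact (QuotientGroup.eq_one_iff G).mpr h)
  have hGn : G ^ n ∈ Subgroup.center SL2 := by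
    rw [← QuotientGroup.eq_one_iff, QuotientGroup.mk_pow, hG]
    exact hgn
  set t : ℂ := A.trace with htdef
  have ht2 : ¬(t = 2 ∨ t = -2) := fun h => hGnc (mem_center_of_trace hn hGn h)
  push_neg at ht2
  obtain ⟨d, hd⟩ := IsAlgClosed.exists_pow_nat_eq (t ^ 2 - 4) (by norm_num : 0 < 2)
  have hdne : d ≠ 0 := by
    intro h
    rw [h] at hd
    have h4 : (t - 2) * (t + 2) = 0 := by linear_combination -hd
    rcases mul_eq_zero.mp h4 with h' | h'
    · exact ht2.1 (by linear_combination h')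
    · exact ht2.2 (by linear_combination h')
  set μ₁ : ℂ := (t + d) / 2 with hμ₁def
  set μ₂ : ℂ := (t - d) / 2 with hμ₂def
  have h1 : μ₁ ^ 2 - t * μ₁ + 1 = 0 := by
    rw [hμ₁def]
    field_simp
    linear_combination hd
  have h2 : μ₂ ^ 2 - t * μ₂ + 1 = 0 := by
    rw [hμ₂def]
    field_simp
    linear_combination hd
  have hμne : μ₁ ≠ μ₂ := by
    intro h
    apply hdne
    have : μ₁ - μ₂ = d := by rw [hμ₁def, hμ₂def]; ring
    rw [h, sub_self] at this
    exact this.symm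
  obtain ⟨v₁, hv₁, hAv₁⟩ := eigenvec_exists hdet h1
  obtain ⟨v₂, hv₂, hAv₂⟩ := eigenvec_exists hdet h2
  have hΔ : v₁ 0 * v₂ 1 - v₁ 1 * v₂ 0 ≠ 0 := by
    intro h
    obtain ⟨r, hr⟩ := prop_two h hv₁
    have e2 : A *ᵥ v₂ = μ₁ • v₂ := by
      rw [hr, Matrix.mulVec_smul, hAv₁, smul_comm]
    exact hμne (eig_unique hv₂ e2 hAv₂)
  have hstab' : (QuotientGroup.mk (G ^ k) : PSL2) ∈
      MulAction.stabilizer PSL2 (Projectivization.mk ℂ w hw) := by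
    rw [hp, QuotientGroup.mk_pow, hG, hk]
    exact hstab
  obtain ⟨c, hc0, hc⟩ := exists_eig_of_stab hw hstab'
  have hAk : ((G ^ k : SL2) : Matrix (Fin 2) (Fin 2) ℂ) = A ^ k :=
    Matrix.SpecialLinearGroup.coe_pow G k
  rw [hAk] at hc
  have hek1 : A ^ k *ᵥ v₁ = (μ₁ ^ k) • v₁ := eigen_pow hAv₁ k
  have hek2 : A ^ k *ᵥ v₂ = (μ₂ ^ k) • v₂ := eigen_pow hAv₂ k
  by_cases hss : μ₁ ^ k = μ₂ ^ k
  · exfalso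
    have hE : ∀ u : Fin 2 → ℂ, A ^ k *ᵥ u = (μ₁ ^ k) • u := by
      intro u
      obtain ⟨a, b, hab⟩ := span_two hΔ u
      rw [hab, Matrix.mulVec_add, Matrix.mulVec_smul, Matrix.mulVec_smul, hek1, hek2, ← hss,
        smul_comm a, smul_comm b, ← smul_add]
    have hscal : ((G ^ k : SL2) : Matrix (Fin 2) (Fin 2) ℂ) = Matrix.scalar (Fin 2) (μ₁ ^ k) := by
      rw [hAk, scalar_eq_smul_one]
      ext i j
      have h3 := congrFun (hE (Pi.single j 1)) i
      rw [Matrix.mulVec_single_one] at h3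
      show (A ^ k) i j = _
      rw [show (A ^ k).col j i = (A ^ k) i j from rfl] at h3
      rw [h3]
      by_cases hij : i = j <;>
        simp [hij, Matrix.one_apply, Pi.single_apply]
    have hsq : (μ₁ ^ k) ^ 2 = 1 := by
      have hd1 : ((G ^ k : SL2) : Matrix (Fin 2) (Fin 2) ℂ).det = 1 := (G ^ k).property
      rw [hscal, scalar_eq_smul_one] at hd1
      rw [← hd1, Matrix.det_fin_two]
      simp [Matrix.smul_apply, Matrix.one_apply]
      ring
    have hcenk : G ^ k ∈ Subgroup.center SL2 :=
      Matrix.SpecialLinearGroup.mem_center_iff.mpr ⟨μ₁ ^ k, by simpa using hsq, hscal.symm⟩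
    apply hs₀
    rw [← hk, ← hG, ← QuotientGroup.mk_pow]
    exact (QuotientGroup.eq_one_iff _).mpr hcenk
  · obtain ⟨a, b, hab⟩ := span_two hΔ w
    have e1 : A ^ k *ᵥ w = (a * μ₁ ^ k) • v₁ + (b * μ₂ ^ k) • v₂ := by
      rw [hab, Matrix.mulVec_add, Matrix.mulVec_smul, Matrix.mulVec_smul, hek1, hek2,
        smul_smul, smul_smul]
    have e2 : A ^ k *ᵥ w = (c * a) • v₁ + (c * b) • v₂ := by
      rw [hc, hab, smul_add, smul_smul, smul_smul]
    have heq : (a * (μ₁ ^ k - c)) • v₁ + (b * (μ₂ ^ k - c)) • v₂ = 0 := by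
      have e3 := e1.symm.trans e2
      calc (a * (μ₁ ^ k - c)) • v₁ + (b * (μ₂ ^ k - c)) • v₂
          = ((a * μ₁ ^ k) • v₁ + (b * μ₂ ^ k) • v₂) - ((c * a) • v₁ + (c * b) • v₂) := by
            rw [mul_sub, mul_sub, sub_smul, sub_smul]
            module
        _ = 0 := by rw [e3, sub_self]
    obtain ⟨ha0, hb0⟩ := indep_two hΔ heq
    have key : A *ᵥ w = μ₁ • w ∨ A *ᵥ w = μ₂ • w := by
      rcases mul_eq_zero.mp ha0 with ha | hax
      · right
        have hwb : w = b • v₂ := by rw [hab, ha, zero_smul, zero_add]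
        rw [hwb, Matrix.mulVec_smul, hAv₂, smul_comm]
      · left
        have hbz : b = 0 := by
          rcases mul_eq_zero.mp hb0 with h | h
          · exact h
          · exfalso
            apply hss
            have hx : μ₁ ^ k = c := by linear_combination hax
            have hy : μ₂ ^ k = c := by linear_combination h
            rw [hx, hy]
        have hwa : w = a • v₁ := by rw [hab, hbz, zero_smul, add_zero]
        rw [hwa, Matrix.mulVec_smul, hAv₁, smul_comm]
    show g • p = p
    rw [← hp, ← hG, psl_smul_mk, Projectivization.mk_eq_mk_iff']
    rcases key with h | h
    · exact ⟨μ₁, h.symm⟩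
    · exact ⟨μ₂, h.symm⟩

end Helpers5

/-- For a finite subgroup `Γ < PSL₂(ℂ)` and `p ∈ ℙ¹` with nontrivial
stabilizer, the stabilizer `Stab_Γ(p)` is a maximal cyclic subgroup of `Γ`: it is cyclic,
and no cyclic subgroup of `Γ` properly contains it. -/
theorem stabilizer_maximal_cyclic (Γ : Subgroup PSL2) (hΓ : Finite Γ) (p : ProjLine)
    (S : Subgroup PSL2) (hS : S = Γ ⊓ MulAction.stabilizer PSL2 p) (hne : S ≠ ⊥) :
    IsCyclic ↥S ∧ ∀ C : Subgroup PSL2, C ≤ Γ → IsCyclic ↥C → S ≤ C → C = S := by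
  have hSΓ : S ≤ Γ := by rw [hS]; exact inf_le_left
  have hSstab : S ≤ MulAction.stabilizer PSL2 p := by rw [hS]; exact inf_le_right
  have hSfin : Finite ↥S := Finite.of_injective _ (Subgroup.inclusion_injective hSΓ)
  refine ⟨stab_isCyclic S hSstab, ?_⟩
  intro C hCΓ hCyc hSC
  have hCfin : Finite ↥C := Finite.of_injective _ (Subgroup.inclusion_injective hCΓ)
  refine le_antisymm ?_ hSC
  -- a nontrivial element of S
  obtain ⟨s₀, hs₀ne⟩ := Subgroup.ne_bot_iff_exists_ne_one.mp hne
  have hs₀S : (s₀ : PSL2) ∈ S := s₀.2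
  have hs₀1 : (s₀ : PSL2) ≠ 1 := fun h => hs₀ne (Subtype.ext h)
  -- a generator of C
  obtain ⟨g, hgall⟩ := hCyc.exists_generator
  -- s₀ is a power of g
  have hs₀C : (s₀ : PSL2) ∈ C := hSC hs₀S
  have hzp : (⟨(s₀ : PSL2), hs₀C⟩ : ↥C) ∈ Subgroup.zpowers g := hgall _
  have hfin : IsOfFinOrder g := isOfFinOrder_of_finite g
  obtain ⟨k, hk⟩ := hfin.mem_powers_iff_mem_zpowers.mpr hzp
  have hk' : (g : PSL2) ^ k = (s₀ : PSL2) := by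
    have := congrArg (fun x : ↥C => (x : PSL2)) hk
    simpa using this
  -- g has finite order
  have hn : 0 < orderOf g := orderOf_pos g
  have hgn : (g : PSL2) ^ orderOf g = 1 := by
    have := pow_orderOf_eq_one g
    have h2 := congrArg (fun x : ↥C => (x : PSL2)) this
    exact_mod_cast h2
  -- g stabilizes p
  have hgstab : (g : PSL2) ∈ MulAction.stabilizer PSL2 p :=
    generator_mem_stabilizer hn hgn hk' hs₀1 (hSstab hs₀S)
  -- conclude
  intro x hx
  obtain ⟨m, hm⟩ := hgall ⟨x, hx⟩
  have hm' : (g : PSL2) ^ m = x := by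
    have := congrArg (fun y : ↥C => (y : PSL2)) hm
    simpa using this
  rw [hS]
  refine ⟨hCΓ hx, ?_⟩
  rw [← hm']
  exact Subgroup.zpow_mem _ hgstab m
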